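/- Let T be a bounded self-adjoint operator on a separable infinite-dimensional complex Hilbert space H, let (x_n) be a dense sequence in σ(T), and suppose ψ ∈ H is nonzero and satisfies d⁻_{μ_ψ^T}(x_n) = 0 and d⁺_{μ_ψ^T}(x_n) = ∞ for every n. Then the set J_ψ := {x ∈ σ(T) : d⁺_{μ_ψ^T}(x) = ∞ and d⁻_{μ_ψ^T}(x) = 0} is generic in σ(T), i.e., it contains a dense G_δ subset of σ(T) (with the subspace topology from ℝ). -/

import Mathlib

open MeasureTheory Filter Set Metric
open scoped ENNReal Topology Classical

noncomputable section

/-- `μ` is uniformly `α`-Hölder continuous: there is `C > 0` with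
`μ(I) < C |I|^α` for every (nondegenerate) interval `I` with `|I| < 1`. -/
def UnifHolder (μ : Measure ℝ) (α : ℝ) : Prop :=
  ∃ C > (0 : ℝ), ∀ a b : ℝ, a < b → b - a < 1 →
    μ (Set.Icc a b) < ENNReal.ofReal (C * (b - a) ^ α)

/-- The Fourier transform `μ̂(s) = ∫ e^{-isx} dμ(x)` of a finite Borel measure on `ℝ`. -/
def measureFT (μ : Measure ℝ) (s : ℝ) : ℂ :=
  ∫ x : ℝ, Complex.exp (-(s * x) * Complex.I) ∂μ

/-- The time-average quantum return probability
`W_μ(t) = (1/t) ∫_0^t |μ̂(s)|² ds`. -/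
def Wavg (μ : Measure ℝ) (t : ℝ) : ℝ :=
  (1 / t) * ∫ s in Set.Ioc (0 : ℝ) t, ‖measureFT μ s‖ ^ 2

/-- `μ` is the spectral measure of the pair `(T, ψ)`: it is finite, vanishes outside
the spectrum of `T`, and `∫ f dμ = ⟨ψ, f(T)ψ⟩` for every continuous `f : ℝ → ℝ`,
where `f(T)` is given by the continuous functional calculus. -/
def IsSpectralMeasure {H : Type*} [NormedAddCommGroup H] [InnerProductSpace ℂ H]
    [CompleteSpace H] (T : H →L[ℂ] H) (ψ : H) (μ : Measure ℝ) : Prop :=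
  IsFiniteMeasure μ ∧ μ {x : ℝ | (x : ℂ) ∉ spectrum ℂ T} = 0 ∧
    ∀ f : C(ℝ, ℝ), ∫ x, f x ∂μ = (inner ℂ ψ ((cfc (f : ℝ → ℝ) T) ψ) : ℂ).re

/-- The real part of the spectrum of a bounded operator. -/
def realSpectrum {H : Type*} [NormedAddCommGroup H] [InnerProductSpace ℂ H]
    [CompleteSpace H] (T : H →L[ℂ] H) : Set ℝ :=
  {x : ℝ | (x : ℂ) ∈ spectrum ℂ T}

/-- `μ` is `α`-Hausdorff continuous: `μ(Λ) = 0` for every Borel set `Λ` with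
`h^α(Λ) = 0`. -/
def HausdorffCont (μ : Measure ℝ) (α : ℝ) : Prop :=
  ∀ Λ : Set ℝ, MeasurableSet Λ → μH[α] Λ = 0 → μ Λ = 0

/-- The lower pointwise scaling exponent `d⁻_μ(x)`, with value `∞` when
`μ(B(x;ε)) = 0` for some `ε > 0`. -/
def dLow (μ : Measure ℝ) (x : ℝ) : EReal :=
  if ∃ ε > (0 : ℝ), μ (Metric.ball x ε) = 0 then ⊤
  else Filter.liminf
    (fun ε : ℝ => ((Real.log (μ (Metric.ball x ε)).toReal / Real.log ε : ℝ) : EReal))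
    (𝓝[>] (0 : ℝ))

/-- The upper pointwise scaling exponent `d⁺_μ(x)`, with value `∞` when
`μ(B(x;ε)) = 0` for some `ε > 0`. -/
def dUp (μ : Measure ℝ) (x : ℝ) : EReal :=
  if ∃ ε > (0 : ℝ), μ (Metric.ball x ε) = 0 then ⊤
  else Filter.limsup
    (fun ε : ℝ => ((Real.log (μ (Metric.ball x ε)).toReal / Real.log ε : ℝ) : EReal))
    (𝓝[>] (0 : ℝ))

/-- The lower correlation dimension `D⁻_μ(2)`. -/
def DLow2 (μ : Measure ℝ) : EReal :=
  Filter.liminf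
    (fun ε : ℝ =>
      ((Real.log (∫ x, (μ (Metric.ball x ε)).toReal ∂μ) / Real.log ε : ℝ) : EReal))
    (𝓝[>] (0 : ℝ))

/-- The upper correlation dimension `D⁺_μ(2)`. -/
def DUp2 (μ : Measure ℝ) : EReal :=
  Filter.limsup
    (fun ε : ℝ =>
      ((Real.log (∫ x, (μ (Metric.ball x ε)).toReal ∂μ) / Real.log ε : ℝ) : EReal))
    (𝓝[>] (0 : ℝ))

/-- A set is generic (residual / comeagre in the Baire sense used in the paper)
if it contains a dense `G_δ` set. -/
def Generic {X : Type*} [TopologicalSpace X] (A : Set X) : Prop :=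
  ∃ S : Set X, S ⊆ A ∧ IsGδ S ∧ Dense S

namespace Stmt7Aux

/-- Inner continuity for balls: strict lower bounds on `μ(B(x,ε))` are attained
by smaller balls. -/
lemma exists_ball_lt (μ : Measure ℝ) {x ε : ℝ} (hε : 0 < ε) {c : ℝ≥0∞}
    (h : c < μ (Metric.ball x ε)) :
    ∃ ε' : ℝ, 0 < ε' ∧ ε' < ε ∧ c < μ (Metric.ball x ε') := by
  have hmono : Monotone (fun n : ℕ => Metric.ball x (ε - ε / (n + 2))) := by
    intro n m hnm
    apply Metric.ball_subset_ball
    have hcast : ((n : ℝ) + 2) ≤ ((m : ℝ) + 2) := by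
      have : (n : ℝ) ≤ (m : ℝ) := Nat.cast_le.2 hnm
      linarith
    have hdiv : ε / ((m : ℝ) + 2) ≤ ε / ((n : ℝ) + 2) :=
      div_le_div_of_nonneg_left hε.le (by positivity) hcast
    linarith
  have hU : Metric.ball x ε = ⋃ n : ℕ, Metric.ball x (ε - ε / (n + 2)) := by
    apply subset_antisymm
    · intro y hy
      rw [Metric.mem_ball] at hy
      have hd : 0 < ε - dist y x := by linarith
      obtain ⟨n, hn⟩ := exists_nat_gt (ε / (ε - dist y x))
      refine Set.mem_iUnion.2 ⟨n, ?_⟩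
      rw [Metric.mem_ball]
      have h2 : ε / ((n : ℝ) + 2) < ε - dist y x := by
        rw [div_lt_iff₀ (by positivity)]
        rw [div_lt_iff₀ hd] at hn
        nlinarith [dist_nonneg (x := y) (y := x)]
      linarith
    · refine Set.iUnion_subset fun n => Metric.ball_subset_ball ?_
      have : 0 < ε / ((n : ℝ) + 2) := by positivity
      linarith
  rw [hU, Directed.measure_iUnion hmono.directed_le] at h
  obtain ⟨n, hn⟩ := lt_iSup_iff.1 h
  have h1 : ε / ((n : ℝ) + 2) < ε := by
    rw [div_lt_iff₀ (by positivity)]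
    nlinarith
  have h2 : 0 < ε / ((n : ℝ) + 2) := by positivity
  exact ⟨ε - ε / (n + 2), by linarith, by linarith, hn⟩

/-- Outer continuity for closed balls (finite measure): strict upper bounds on
`μ(B̄(x,ε))` persist for slightly larger radii. -/
lemma exists_closedBall_lt (μ : Measure ℝ) [IsFiniteMeasure μ] {x ε : ℝ} {c : ℝ≥0∞}
    (h : μ (Metric.closedBall x ε) < c) :
    ∃ δ : ℝ, 0 < δ ∧ μ (Metric.closedBall x (ε + δ)) < c := by
  have hI : (⋂ n : ℕ, Metric.closedBall x (ε + 1 / (n + 1))) = Metric.closedBall x ε := by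
    apply subset_antisymm
    · intro y hy
      simp only [Set.mem_iInter, Metric.mem_closedBall] at hy ⊢
      by_contra hlt
      push_neg at hlt
      have h1 : (0 : ℝ) < dist y x - ε := by linarith
      obtain ⟨n, hn⟩ := exists_nat_gt (1 / (dist y x - ε))
      have h2 := hy n
      have h3 : 1 / ((n : ℝ) + 1) < dist y x - ε := by
        rw [div_lt_iff₀ (by positivity)]
        rw [div_lt_iff₀ h1] at hn
        nlinarith
      linarith
    · intro y hy
      simp only [Set.mem_iInter, Metric.mem_closedBall] at hy ⊢
      intro n
      have : (0 : ℝ) < 1 / ((n : ℝ) + 1) := by positivity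
      linarith
  have hanti : Antitone (fun n : ℕ => Metric.closedBall x (ε + 1 / (n + 1))) := by
    intro n m hnm
    apply Metric.closedBall_subset_closedBall
    have hc : ((n : ℝ) + 1) ≤ ((m : ℝ) + 1) := by
      have : (n : ℝ) ≤ (m : ℝ) := Nat.cast_le.2 hnm
      linarith
    have : 1 / ((m : ℝ) + 1) ≤ 1 / ((n : ℝ) + 1) :=
      one_div_le_one_div_of_le (by positivity) hc
    linarith
  have ht := tendsto_measure_iInter_atTop
    (μ := μ) (s := fun n : ℕ => Metric.closedBall x (ε + 1 / (n + 1)))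
    (fun n => measurableSet_closedBall.nullMeasurableSet) hanti ⟨0, measure_ne_top μ _⟩
  rw [hI] at ht
  obtain ⟨n, hn⟩ := (ht.eventually_lt_const h).exists
  exact ⟨1 / ((n : ℝ) + 1), by positivity, hn⟩

/-- Open sets witnessing `d⁻ = 0`. -/
def Gset (μ : Measure ℝ) (k : ℕ) : Set ℝ :=
  {x | ∃ ε : ℝ, 0 < ε ∧ ε < 1 / ((k : ℝ) + 1) ∧
    ENNReal.ofReal (ε ^ (1 / ((k : ℝ) + 1))) < μ (Metric.ball x ε)}

/-- Open sets witnessing `d⁺ = ∞`. -/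
def Fset (μ : Measure ℝ) (k : ℕ) : Set ℝ :=
  {x | ∃ ε : ℝ, 0 < ε ∧ ε < 1 / ((k : ℝ) + 1) ∧
    μ (Metric.closedBall x ε) < ENNReal.ofReal (ε ^ ((k : ℝ) + 1))}

lemma isOpen_Gset (μ : Measure ℝ) (k : ℕ) : IsOpen (Gset μ k) := by
  rw [Metric.isOpen_iff]
  rintro y ⟨ε, hε0, hεk, hεμ⟩
  obtain ⟨ε', hε'0, hε'ε, hε'μ⟩ := exists_ball_lt μ hε0 hεμ
  refine ⟨ε - ε', by linarith, fun z hz => ?_⟩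
  refine ⟨ε, hε0, hεk, lt_of_lt_of_le hε'μ (measure_mono ?_)⟩
  intro w hw
  rw [Metric.mem_ball] at hw hz ⊢
  have h1 := dist_triangle w y z
  have h2 : dist y z = dist z y := dist_comm y z
  linarith

lemma isOpen_Fset (μ : Measure ℝ) [IsFiniteMeasure μ] (k : ℕ) : IsOpen (Fset μ k) := by
  rw [Metric.isOpen_iff]
  rintro y ⟨ε, hε0, hεk, hεμ⟩
  obtain ⟨δ, hδ0, hδμ⟩ := exists_closedBall_lt μ hεμ
  refine ⟨δ, hδ0, fun z hz => ⟨ε, hε0, hεk, lt_of_le_of_lt (measure_mono ?_) hδμ⟩⟩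
  intro w hw
  rw [Metric.mem_closedBall] at hw ⊢
  rw [Metric.mem_ball] at hz
  have h1 := dist_triangle w z y
  linarith

lemma log_div_log_lt_iff {ε m : ℝ} (hε : 0 < ε) (hε1 : ε < 1) (hm : 0 < m) (a : ℝ) :
    Real.log m / Real.log ε < a ↔ ε ^ a < m := by
  have hlog : Real.log ε < 0 := Real.log_neg hε hε1
  rw [div_lt_iff_of_neg hlog, ← Real.log_rpow hε,
    Real.log_lt_log_iff (Real.rpow_pos_of_pos hε a) hm]

lemma lt_log_div_log_iff {ε m : ℝ} (hε : 0 < ε) (hε1 : ε < 1) (hm : 0 < m) (a : ℝ) :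
    a < Real.log m / Real.log ε ↔ m < ε ^ a := by
  have hlog : Real.log ε < 0 := Real.log_neg hε hε1
  rw [lt_div_iff_of_neg hlog, ← Real.log_rpow hε,
    Real.log_lt_log_iff hm (Real.rpow_pos_of_pos hε a)]

lemma frequently_nhdsGT {P : ℝ → Prop}
    (h : ∀ δ : ℝ, 0 < δ → ∃ ε, ε ∈ Set.Ioo (0 : ℝ) δ ∧ P ε) :
    ∃ᶠ ε in 𝓝[>] (0 : ℝ), P ε := by
  rw [Filter.frequently_iff]
  intro s hs
  obtain ⟨u, hu, hsub⟩ := mem_nhdsGT_iff_exists_Ioo_subset.1 hs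
  obtain ⟨ε, hεI, hP⟩ := h u hu
  exact ⟨ε, hsub hεI, hP⟩

lemma one_div_succ_le_one (k : ℕ) : 1 / ((k : ℝ) + 1) ≤ 1 :=
  (div_le_one (by positivity)).2 (le_add_of_nonneg_left (Nat.cast_nonneg k))

lemma exists_one_div_succ_lt {δ : ℝ} (hδ : 0 < δ) : ∃ n : ℕ, 1 / ((n : ℝ) + 1) < δ := by
  obtain ⟨n, hn⟩ := exists_nat_gt (1 / δ)
  refine ⟨n, ?_⟩
  rw [div_lt_iff₀ (by positivity)]
  rw [div_lt_iff₀ hδ] at hn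
  nlinarith

lemma mem_Gset (μ : Measure ℝ) [IsFiniteMeasure μ] {x : ℝ} (h : dLow μ x = 0) (k : ℕ) :
    x ∈ Gset μ k := by
  rw [dLow] at h
  split_ifs at h with hif
  · exact absurd h (by simp)
  push_neg at hif
  have hklt : (0 : EReal) < ((1 / ((k : ℝ) + 1) : ℝ) : EReal) := by
    rw [EReal.coe_pos]; positivity
  rw [← h] at hklt
  have hfreq := Filter.frequently_lt_of_liminf_lt (by isBoundedDefault) hklt
  have hev : ∀ᶠ ε in 𝓝[>] (0 : ℝ), ε ∈ Set.Ioo (0 : ℝ) (1 / ((k : ℝ) + 1)) :=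
    Ioo_mem_nhdsGT_of_mem ⟨le_refl 0, by positivity⟩
  obtain ⟨ε, hflt, hε0, hεk⟩ := (hfreq.and_eventually hev).exists
  have hε1 : ε < 1 := lt_of_lt_of_le hεk (one_div_succ_le_one k)
  have hm : 0 < (μ (Metric.ball x ε)).toReal :=
    ENNReal.toReal_pos (hif ε hε0) (measure_ne_top μ _)
  rw [EReal.coe_lt_coe_iff, log_div_log_lt_iff hε0 hε1 hm] at hflt
  refine ⟨ε, hε0, hεk, ?_⟩
  rw [← ENNReal.ofReal_toReal (measure_ne_top μ (Metric.ball x ε))]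
  exact (ENNReal.ofReal_lt_ofReal_iff hm).2 hflt

lemma mem_Fset (μ : Measure ℝ) [IsFiniteMeasure μ] {x : ℝ} (h : dUp μ x = ⊤) (k : ℕ) :
    x ∈ Fset μ k := by
  by_cases hif : ∃ ε > (0 : ℝ), μ (Metric.ball x ε) = 0
  · obtain ⟨ε₀, hε₀, hμ0⟩ := hif
    have hmin : 0 < min ε₀ (1 / ((k : ℝ) + 1)) := lt_min hε₀ (by positivity)
    set ε := min ε₀ (1 / ((k : ℝ) + 1)) / 2 with hεdef
    have hε0 : 0 < ε := by positivity
    have hεlt : ε < min ε₀ (1 / ((k : ℝ) + 1)) := half_lt_self hmin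
    refine ⟨ε, hε0, lt_of_lt_of_le hεlt (min_le_right _ _), ?_⟩
    have hsub : Metric.closedBall x ε ⊆ Metric.ball x ε₀ :=
      Metric.closedBall_subset_ball (lt_of_lt_of_le hεlt (min_le_left _ _))
    rw [measure_mono_null hsub hμ0]
    exact ENNReal.ofReal_pos.2 (Real.rpow_pos_of_pos hε0 _)
  · rw [dUp, if_neg hif] at h
    push_neg at hif
    have htop : ((2 * ((k : ℝ) + 1) : ℝ) : EReal) <
        Filter.limsup
          (fun ε : ℝ =>
            ((Real.log (μ (Metric.ball x ε)).toReal / Real.log ε : ℝ) : EReal))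
          (𝓝[>] (0 : ℝ)) := by
      rw [h]; exact EReal.coe_lt_top _
    have hfreq := Filter.frequently_lt_of_lt_limsup (by isBoundedDefault) htop
    have hev : ∀ᶠ ε in 𝓝[>] (0 : ℝ),
        ε ∈ Set.Ioo (0 : ℝ) (min (1 / 2) (1 / ((k : ℝ) + 1))) :=
      Ioo_mem_nhdsGT_of_mem ⟨le_refl 0, by positivity⟩
    obtain ⟨ε, hflt, hε0, hεm⟩ := (hfreq.and_eventually hev).exists
    have hεhalf : ε < 1 / 2 := lt_of_lt_of_le hεm (min_le_left _ _)
    have hεk : ε < 1 / ((k : ℝ) + 1) := lt_of_lt_of_le hεm (min_le_right _ _)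
    have hε1 : ε < 1 := by linarith
    have hm : 0 < (μ (Metric.ball x ε)).toReal :=
      ENNReal.toReal_pos (hif ε hε0) (measure_ne_top μ _)
    rw [EReal.coe_lt_coe_iff, lt_log_div_log_iff hε0 hε1 hm] at hflt
    refine ⟨ε / 2, by positivity, by linarith, ?_⟩
    have hsub : Metric.closedBall x (ε / 2) ⊆ Metric.ball x ε :=
      Metric.closedBall_subset_ball (by linarith)
    have hpow : ε ^ (2 * ((k : ℝ) + 1)) ≤ (ε / 2) ^ ((k : ℝ) + 1) := by
      rw [Real.rpow_mul hε0.le]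
      apply Real.rpow_le_rpow (by positivity) ?_ (by positivity)
      have h2 : ε ^ (2 : ℝ) = ε * ε := by
        rw [show (2 : ℝ) = ((2 : ℕ) : ℝ) by norm_num, Real.rpow_natCast]
        ring
      rw [h2]
      nlinarith
    calc μ (Metric.closedBall x (ε / 2)) ≤ μ (Metric.ball x ε) := measure_mono hsub
      _ = ENNReal.ofReal (μ (Metric.ball x ε)).toReal :=
          (ENNReal.ofReal_toReal (measure_ne_top μ _)).symm
      _ < ENNReal.ofReal (ε ^ (2 * ((k : ℝ) + 1))) :=
          (ENNReal.ofReal_lt_ofReal_iff (Real.rpow_pos_of_pos hε0 _)).2 hflt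
      _ ≤ ENNReal.ofReal ((ε / 2) ^ ((k : ℝ) + 1)) := ENNReal.ofReal_le_ofReal hpow

lemma dLow_eq_zero (μ : Measure ℝ) [IsFiniteMeasure μ] {x : ℝ}
    (hx : ∀ k : ℕ, x ∈ Gset μ k) : dLow μ x = 0 := by
  have hpos : ∀ δ : ℝ, 0 < δ → μ (Metric.ball x δ) ≠ 0 := by
    intro δ hδ
    obtain ⟨n, hn⟩ := exists_one_div_succ_lt hδ
    obtain ⟨ε, hε0, hεn, hεμ⟩ := hx n
    intro h0
    have hz : μ (Metric.ball x ε) = 0 :=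
      measure_mono_null (Metric.ball_subset_ball (by linarith)) h0
    rw [hz] at hεμ
    exact absurd hεμ (by simp)
  rw [dLow, if_neg (by push_neg; exact hpos)]
  apply le_antisymm
  · -- liminf ≤ 0
    have hk : ∀ k : ℕ,
        Filter.liminf
          (fun ε : ℝ =>
            ((Real.log (μ (Metric.ball x ε)).toReal / Real.log ε : ℝ) : EReal))
          (𝓝[>] (0 : ℝ)) ≤ ((1 / ((k : ℝ) + 1) : ℝ) : EReal) := by
      intro k
      apply Filter.liminf_le_of_frequently_le ?_ (by isBoundedDefault)
      apply frequently_nhdsGT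
      intro δ hδ
      obtain ⟨n, hn⟩ := exists_one_div_succ_lt hδ
      obtain ⟨ε, hε0, hεj, hεμ⟩ := hx (max n k)
      have hjn : 1 / (((max n k : ℕ) : ℝ) + 1) ≤ 1 / ((n : ℝ) + 1) :=
        one_div_le_one_div_of_le (by positivity)
          (by have : (n : ℝ) ≤ ((max n k : ℕ) : ℝ) := Nat.cast_le.2 (le_max_left _ _); linarith)
      have hjk : 1 / (((max n k : ℕ) : ℝ) + 1) ≤ 1 / ((k : ℝ) + 1) :=
        one_div_le_one_div_of_le (by positivity)
          (by have : (k : ℝ) ≤ ((max n k : ℕ) : ℝ) := Nat.cast_le.2 (le_max_right _ _); linarith)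
      refine ⟨ε, ⟨hε0, by linarith⟩, ?_⟩
      have hε1 : ε < 1 := lt_of_lt_of_le hεj (one_div_succ_le_one _)
      have hm : 0 < (μ (Metric.ball x ε)).toReal :=
        ENNReal.toReal_pos (hpos ε hε0) (measure_ne_top μ _)
      have hlt : ε ^ (1 / (((max n k : ℕ) : ℝ) + 1)) < (μ (Metric.ball x ε)).toReal := by
        rw [← ENNReal.ofReal_lt_iff_lt_toReal (Real.rpow_pos_of_pos hε0 _).le
          (measure_ne_top μ _)]
        exact hεμ
      have hflt := (log_div_log_lt_iff hε0 hε1 hm _).2 hlt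
      exact EReal.coe_le_coe_iff.2 (by linarith)
    by_contra hc
    push_neg at hc
    obtain ⟨c, hc0, hcl⟩ := EReal.exists_between_coe_real hc
    have hc0' : (0 : ℝ) < c := EReal.coe_pos.1 hc0
    obtain ⟨n, hn⟩ := exists_one_div_succ_lt hc0'
    exact absurd hcl (not_lt.2 (le_trans (hk n) (EReal.coe_le_coe_iff.2 hn.le)))
  · -- 0 ≤ liminf
    by_contra hc
    push_neg at hc
    obtain ⟨c, hcl, hc0⟩ := EReal.exists_between_coe_real hc
    have hc0' : c < 0 := by exact_mod_cast hc0
    set C := (μ Set.univ).toReal with hC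
    have hle : ((c : ℝ) : EReal) ≤
        Filter.liminf
          (fun ε : ℝ =>
            ((Real.log (μ (Metric.ball x ε)).toReal / Real.log ε : ℝ) : EReal))
          (𝓝[>] (0 : ℝ)) := by
      apply Filter.le_liminf_of_le (by isBoundedDefault)
      have hev : ∀ᶠ ε in 𝓝[>] (0 : ℝ),
          ε ∈ Set.Ioo (0 : ℝ) (min 1 (Real.exp (Real.log C / c))) :=
        Ioo_mem_nhdsGT_of_mem ⟨le_refl 0, by positivity⟩
      apply hev.mono
      rintro ε ⟨hε0, hεlt⟩
      have hε1 : ε < 1 := lt_of_lt_of_le hεlt (min_le_left _ _)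
      have hεe : ε ≤ Real.exp (Real.log C / c) :=
        (lt_of_lt_of_le hεlt (min_le_right _ _)).le
      have hlog : Real.log ε < 0 := Real.log_neg hε0 hε1
      have hm : 0 < (μ (Metric.ball x ε)).toReal :=
        ENNReal.toReal_pos (hpos ε hε0) (measure_ne_top μ _)
      have hmC : (μ (Metric.ball x ε)).toReal ≤ C :=
        ENNReal.toReal_mono (measure_ne_top μ _) (measure_mono (Set.subset_univ _))
      have hCpos : 0 < C := lt_of_lt_of_le hm hmC
      have hlogm : Real.log (μ (Metric.ball x ε)).toReal ≤ Real.log C :=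
        (Real.log_le_log_iff hm hCpos).2 hmC
      have hlε : Real.log ε ≤ Real.log C / c := by
        have h1 : Real.log ε ≤ Real.log (Real.exp (Real.log C / c)) :=
          (Real.log_le_log_iff hε0 (Real.exp_pos _)).2 hεe
        rwa [Real.log_exp] at h1
      have hkey : Real.log C ≤ c * Real.log ε := by
        have h2 : c * (Real.log C / c) ≤ c * Real.log ε :=
          mul_le_mul_of_nonpos_left hlε hc0'.le
        have h3 : c * (Real.log C / c) = Real.log C := by
          rw [← mul_div_assoc]
          exact mul_div_cancel_left₀ _ hc0'.ne
        linarith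
      apply EReal.coe_le_coe_iff.2
      rw [le_div_iff_of_neg hlog]
      linarith
    exact absurd hcl (not_lt.2 hle)

lemma dUp_eq_top (μ : Measure ℝ) [IsFiniteMeasure μ] {x : ℝ}
    (hx : ∀ k : ℕ, x ∈ Fset μ k) : dUp μ x = ⊤ := by
  rw [dUp]
  split_ifs with hif
  · rfl
  push_neg at hif
  by_contra hc
  have hlt : Filter.limsup
      (fun ε : ℝ =>
        ((Real.log (μ (Metric.ball x ε)).toReal / Real.log ε : ℝ) : EReal))
      (𝓝[>] (0 : ℝ)) < ⊤ := lt_top_iff_ne_top.2 hc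
  obtain ⟨r, hrl, _⟩ := EReal.exists_between_coe_real hlt
  have hge : ((r : ℝ) : EReal) ≤
      Filter.limsup
        (fun ε : ℝ =>
          ((Real.log (μ (Metric.ball x ε)).toReal / Real.log ε : ℝ) : EReal))
        (𝓝[>] (0 : ℝ)) := by
    apply Filter.le_limsup_of_frequently_le ?_ (by isBoundedDefault)
    apply frequently_nhdsGT
    intro δ hδ
    obtain ⟨n₁, hn₁⟩ := exists_nat_gt r
    obtain ⟨n₂, hn₂⟩ := exists_one_div_succ_lt hδ
    obtain ⟨ε, hε0, hεj, hεμ⟩ := hx (max n₁ n₂)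
    have hjn : 1 / (((max n₁ n₂ : ℕ) : ℝ) + 1) ≤ 1 / ((n₂ : ℝ) + 1) :=
      one_div_le_one_div_of_le (by positivity)
        (by have : (n₂ : ℝ) ≤ ((max n₁ n₂ : ℕ) : ℝ) := Nat.cast_le.2 (le_max_right _ _); linarith)
    refine ⟨ε, ⟨hε0, by linarith⟩, ?_⟩
    have hε1 : ε < 1 := lt_of_lt_of_le hεj (one_div_succ_le_one _)
    have hm : 0 < (μ (Metric.ball x ε)).toReal :=
      ENNReal.toReal_pos (hif ε hε0) (measure_ne_top μ _)
    have hball : μ (Metric.ball x ε) < ENNReal.ofReal (ε ^ (((max n₁ n₂ : ℕ) : ℝ) + 1)) :=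
      lt_of_le_of_lt (measure_mono Metric.ball_subset_closedBall) hεμ
    have hmlt : (μ (Metric.ball x ε)).toReal < ε ^ (((max n₁ n₂ : ℕ) : ℝ) + 1) :=
      (ENNReal.lt_ofReal_iff_toReal_lt (measure_ne_top μ _)).1 hball
    have hflt := (lt_log_div_log_iff hε0 hε1 hm _).2 hmlt
    have hrj : r ≤ ((max n₁ n₂ : ℕ) : ℝ) + 1 := by
      have : (n₁ : ℝ) ≤ ((max n₁ n₂ : ℕ) : ℝ) := Nat.cast_le.2 (le_max_left _ _)
      linarith
    exact EReal.coe_le_coe_iff.2 (by linarith)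
  exact absurd hrl (not_lt.2 hge)

end Stmt7Aux

/-- If `(x_n)` is dense in `σ(T)` and `ψ ≠ 0` satisfies
`d⁻_{μ_ψ}(x_n) = 0` and `d⁺_{μ_ψ}(x_n) = ∞` for every `n`, then `J_ψ` is generic in `σ(T)`. -/
theorem stmt_7 {H : Type*} [NormedAddCommGroup H] [InnerProductSpace ℂ H] [CompleteSpace H]
    [TopologicalSpace.SeparableSpace H] (hinf : ¬ FiniteDimensional ℂ H)
    (T : H →L[ℂ] H) (hT : IsSelfAdjoint T)
    (μm : H → Measure ℝ) (hμm : ∀ ψ : H, IsSpectralMeasure T ψ (μm ψ))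
    (xs : ℕ → realSpectrum T) (hdense : DenseRange xs)
    (ψ : H) (hψ : ψ ≠ 0)
    (hxs : ∀ n : ℕ, dLow (μm ψ) (xs n : ℝ) = 0 ∧ dUp (μm ψ) (xs n : ℝ) = ⊤) :
    Generic {x : realSpectrum T | dUp (μm ψ) (x : ℝ) = ⊤ ∧ dLow (μm ψ) (x : ℝ) = 0} := by
  haveI : IsFiniteMeasure (μm ψ) := (hμm ψ).1
  refine ⟨⋂ k : ℕ, ((Subtype.val ⁻¹' Stmt7Aux.Gset (μm ψ) k) ∩
      (Subtype.val ⁻¹' Stmt7Aux.Fset (μm ψ) k)), ?_, ?_, ?_⟩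
  · intro x hx
    simp only [Set.mem_iInter, Set.mem_inter_iff, Set.mem_preimage] at hx
    exact ⟨Stmt7Aux.dUp_eq_top (μm ψ) (fun k => (hx k).2),
      Stmt7Aux.dLow_eq_zero (μm ψ) (fun k => (hx k).1)⟩
  · exact IsGδ.iInter fun k =>
      (((Stmt7Aux.isOpen_Gset (μm ψ) k).preimage continuous_subtype_val).inter
        ((Stmt7Aux.isOpen_Fset (μm ψ) k).preimage continuous_subtype_val)).isGδ
  · apply Dense.mono ?_ hdense
    rintro _ ⟨n, rfl⟩
    simp only [Set.mem_iInter, Set.mem_inter_iff, Set.mem_preimage]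
    exact fun k => ⟨Stmt7Aux.mem_Gset (μm ψ) (hxs n).1 k,
      Stmt7Aux.mem_Fset (μm ψ) (hxs n).2 k⟩
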